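/- Let n be a positive integer and K a field of characteristic zero containing a primitive n-th root of unity ζ. Let L/K be a finite Galois field extension of degree 2n and suppose there are σ, τ in the Galois group Gal(L/K) such that σ has order n, τ has order 2, τ ∘ σ ∘ τ = σ⁻¹, and σ and τ generate Gal(L/K) (so Gal(L/K) is dihedral of order 2n). Then there exist an element x ∈ L and elements a, F ∈ K such that L = K(x), x^(2n) − 2·a·x^n + F^n = 0, σ(x) = ζ·x, and x·τ(x) = F. -/

import Mathlib

/-!
STATEMENT 0: Let `n` be a positive integer and `K` a field of characteristic zero containing a
primitive `n`-th root of unity `ζ`.  Let `L/K` be a finite Galois field extension of degree `2n`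
and suppose there are `σ, τ ∈ Gal(L/K)` with `σ` of order `n`, `τ` of order `2`,
`τ ∘ σ ∘ τ = σ⁻¹`, and `σ, τ` generating `Gal(L/K)` (so `Gal(L/K)` is dihedral of order `2n`).
Then there exist `x ∈ L` and `a, F ∈ K` with `L = K(x)`, `x^(2n) − 2·a·x^n + F^n = 0`,
`σ(x) = ζ·x`, and `x·τ(x) = F`.
-/

theorem dihedral_galois_extension_building_data
    (n : ℕ) (hn : 0 < n)
    (K L : Type) [Field K] [Field L] [Algebra K L] [CharZero K]
    [IsGalois K L] (hdeg : Module.finrank K L = 2 * n)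
    (ζ : K) (hζ : IsPrimitiveRoot ζ n)
    (σ τ : L ≃ₐ[K] L)
    (hσ : orderOf σ = n) (hτ : orderOf τ = 2)
    (hrel : τ * σ * τ = σ⁻¹)
    (hgen : Subgroup.closure ({σ, τ} : Set (L ≃ₐ[K] L)) = ⊤) :
    ∃ (x : L) (a F : K),
      IntermediateField.adjoin K {x} = ⊤ ∧
      x ^ (2 * n) - 2 * algebraMap K L a * x ^ n + (algebraMap K L F) ^ n = 0 ∧
      σ x = algebraMap K L ζ * x ∧
      x * τ x = algebraMap K L F := by
  classical
  have hinj : Function.Injective (algebraMap K L) := (algebraMap K L).injective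
  haveI : CharZero L := charZero_of_injective_algebraMap hinj
  haveI : FiniteDimensional K L :=
    FiniteDimensional.of_finrank_pos (by omega : 0 < Module.finrank K L)
  set z : L := algebraMap K L ζ with hzdef
  have hz : IsPrimitiveRoot z n := hζ.map_of_injective hinj
  have hzn : z ^ n = 1 := hz.pow_eq_one
  have hz0 : z ≠ 0 := by
    intro h
    rw [h, zero_pow hn.ne'] at hzn
    exact zero_ne_one hzn
  have hσn : σ ^ n = 1 := by rw [← hσ]; exact pow_orderOf_eq_one σ
  have hτ2 : τ * τ = 1 := by
    have h := pow_orderOf_eq_one τ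
    rwa [hτ, sq] at h
  have hτinv : τ⁻¹ = τ := inv_eq_of_mul_eq_one_right hτ2
  have hττ : ∀ y : L, τ (τ y) = y := by
    intro y
    have h : (τ * τ) y = (1 : L ≃ₐ[K] L) y := by rw [hτ2]
    simpa using h
  have hσz : ∀ g : L ≃ₐ[K] L, g z = z := fun g => g.commutes ζ
  -- elements fixed by σ and τ are in K
  have hfix : ∀ y : L, σ y = y → τ y = y → ∃ k : K, algebraMap K L k = y := by
    intro y hy1 hy2
    have hall : ∀ g : L ≃ₐ[K] L, g y = y := by
      intro g
      have hg : g ∈ Subgroup.closure ({σ, τ} : Set (L ≃ₐ[K] L)) := by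
        rw [hgen]; trivial
      induction hg using Subgroup.closure_induction with
      | mem a ha =>
          rcases ha with rfl | ha
          · exact hy1
          · rw [Set.mem_singleton_iff] at ha; subst ha; exact hy2
      | one => rfl
      | mul a b _ _ ha hb => rw [AlgEquiv.mul_apply, hb, ha]
      | inv a _ ha =>
          have h := congrArg (⇑a⁻¹) ha
          rw [← AlgEquiv.mul_apply, inv_mul_cancel, AlgEquiv.one_apply] at h
          exact h.symm
    have htopfix : IntermediateField.fixingSubgroup (⊥ : IntermediateField K L) = ⊤ := by
      rw [eq_top_iff]
      intro g _
      rw [IntermediateField.fixingSubgroup, mem_fixingSubgroup_iff]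
      intro u hu
      rcases IntermediateField.mem_bot.mp hu with ⟨k, rfl⟩
      exact g.commutes k
    have hbot := IsGalois.fixedField_fixingSubgroup (⊥ : IntermediateField K L)
    rw [htopfix] at hbot
    have hy : y ∈ IntermediateField.fixedField (⊤ : Subgroup (L ≃ₐ[K] L)) :=
      fun g => hall g
    rw [hbot] at hy
    exact IntermediateField.mem_bot.mp hy
  -- existence of a nonzero eigenvector for σ with eigenvalue z
  obtain ⟨x₀, hx₀0, hx₀σ⟩ : ∃ x₀ : L, x₀ ≠ 0 ∧ σ x₀ = z * x₀ := by
    have hP : ∃ y : L, ∑ j ∈ Finset.range n, z⁻¹ ^ j * (σ ^ j) y ≠ 0 := by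
      by_contra hcon
      push_neg at hcon
      have hMHinj : Function.Injective
          (fun j : Fin n => ((σ ^ (j : ℕ) : L ≃ₐ[K] L) : L →* L)) := by
        intro i j hij
        have hpow : σ ^ (i : ℕ) = σ ^ (j : ℕ) := by
          ext u
          exact congrArg (fun f => f u) hij
        exact Fin.ext (pow_injOn_Iio_orderOf (by rw [hσ]; exact i.2)
          (by rw [hσ]; exact j.2) hpow)
      have hli := (linearIndependent_monoidHom L L).comp _ hMHinj
      rw [Fintype.linearIndependent_iff] at hli
      have h0 := hli (fun j => z⁻¹ ^ (j : ℕ)) ?_ ⟨0, hn⟩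
      · simp at h0
      · funext y
        have h := hcon y
        rw [← Fin.sum_univ_eq_sum_range (fun j => z⁻¹ ^ j * (σ ^ j) y) n] at h
        simpa [Finset.sum_apply, smul_eq_mul] using h
    obtain ⟨y, hy⟩ := hP
    refine ⟨∑ j ∈ Finset.range n, z⁻¹ ^ j * (σ ^ j) y, hy, ?_⟩
    have hQ : ∀ j : ℕ, σ (z⁻¹ ^ j * (σ ^ j) y)
        = z * (z⁻¹ ^ (j + 1) * (σ ^ (j + 1)) y) := by
      intro j
      rw [map_mul, map_pow, map_inv₀, hσz, ← AlgEquiv.mul_apply, ← pow_succ']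
      rw [pow_succ]
      field_simp
      ring_nf
      rw [mul_inv_cancel₀ hz0, one_mul]
    rw [map_sum]
    simp_rw [hQ]
    rw [← Finset.mul_sum]
    congr 1
    have hshift : ∑ j ∈ Finset.range n, z⁻¹ ^ (j + 1) * (σ ^ (j + 1)) y
        = (∑ j ∈ Finset.range (n + 1), z⁻¹ ^ j * (σ ^ j) y)
          - z⁻¹ ^ 0 * (σ ^ 0) y := by
      rw [Finset.sum_range_succ' (fun j => z⁻¹ ^ j * (σ ^ j) y) n]
      ring
    rw [hshift, Finset.sum_range_succ]
    have hQn : z⁻¹ ^ n * (σ ^ n) y = z⁻¹ ^ 0 * (σ ^ 0) y := by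
      rw [hσn, inv_pow, hzn]
      simp
    rw [hQn]
    ring
  -- existence of m0 fixed by σ but not τ
  obtain ⟨m0, hm0σ, hm0τ⟩ : ∃ m0 : L, σ m0 = m0 ∧ τ m0 ≠ m0 := by
    by_contra hc
    push_neg at hc
    have hMbot : IntermediateField.fixedField (Subgroup.zpowers σ) = ⊥ := by
      rw [eq_bot_iff]
      intro m hm
      have hmσ : σ m = m := hm ⟨σ, Subgroup.mem_zpowers σ⟩
      obtain ⟨k, hk⟩ := hfix m hmσ (hc m hmσ)
      exact IntermediateField.mem_bot.mpr ⟨k, hk⟩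
    have h1 : Module.finrank (IntermediateField.fixedField (Subgroup.zpowers σ)) L
        = Fintype.card (Subgroup.zpowers σ) :=
      (IntermediateField.finrank_fixedField_eq_card _).trans Nat.card_eq_fintype_card
    rw [Fintype.card_zpowers, hσ, hMbot] at h1
    have h2 : Module.finrank K (⊥ : IntermediateField K L)
        * Module.finrank (⊥ : IntermediateField K L) L = Module.finrank K L :=
      Module.finrank_mul_finrank _ _ _
    rw [IntermediateField.finrank_bot, one_mul, h1, hdeg] at h2
    omega
  -- choose a good eigenvector x
  obtain ⟨x, hx0, hxσ, hxgood⟩ :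
      ∃ x : L, x ≠ 0 ∧ σ x = z * x ∧ ∀ w : L, w ^ n = 1 → τ x ≠ w * x := by
    by_contra hc
    push_neg at hc
    -- for every c : K the element (m0 + c) * x₀ is a bad eigenvector
    have hm0c : ∀ c : K, m0 + algebraMap K L c ≠ 0 := by
      intro c h
      apply hm0τ
      have h2 : m0 = algebraMap K L (-c) := by
        rw [map_neg]; exact eq_neg_of_add_eq_zero_left h
      rw [h2, τ.commutes]
    have hτm0c : ∀ c : K, τ m0 + algebraMap K L c ≠ 0 := by
      intro c h
      apply hm0τ
      have h1 : τ m0 = algebraMap K L (-c) := by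
        rw [map_neg]; exact eq_neg_of_add_eq_zero_left h
      have h2 : m0 = algebraMap K L (-c) := by
        conv_lhs => rw [← hττ m0, h1, τ.commutes]
      rw [h1, h2]
    have hτx₀ : τ x₀ ≠ 0 := fun h => hx₀0 (by rw [← hττ x₀, h, map_zero])
    set T : Set L := {w : L | w ^ n = 1} with hT
    have hTfin : T.Finite := by
      apply Set.Finite.subset (Polynomial.finite_setOf_isRoot
        (Polynomial.X_pow_sub_C_ne_zero hn (1 : L)))
      intro w hw
      simp only [Set.mem_setOf_eq, Polynomial.IsRoot, Polynomial.eval_sub,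
        Polynomial.eval_pow, Polynomial.eval_X, Polynomial.eval_C]
      rw [hw]; ring
    set f : K → L := fun c =>
      ((τ m0 + algebraMap K L c) * τ x₀) / ((m0 + algebraMap K L c) * x₀) with hf
    have hrange : ∀ c : K, f c ∈ T := by
      intro c
      set xc := (m0 + algebraMap K L c) * x₀ with hxc
      have hxc0 : xc ≠ 0 := mul_ne_zero (hm0c c) hx₀0
      have hxcσ : σ xc = z * xc := by
        rw [hxc, map_mul, map_add, hm0σ, σ.commutes, hx₀σ]; ring
      obtain ⟨w, hw1, hw2⟩ := hc xc hxc0 hxcσ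
      have hτxc : τ xc = (τ m0 + algebraMap K L c) * τ x₀ := by
        rw [hxc, map_mul, map_add, τ.commutes]
      have : f c = w := by
        rw [hf]
        simp only
        rw [← hτxc, hw2, hxc]
        field_simp
        exact mul_div_cancel_right₀ w (hm0c c)
      rw [hT, Set.mem_setOf_eq, this]
      exact hw1
    have hfinj : Function.Injective f := by
      intro c c' hcc
      rw [hf] at hcc
      simp only at hcc
      rw [div_eq_div_iff (mul_ne_zero (hm0c c) hx₀0) (mul_ne_zero (hm0c c') hx₀0)] at hcc
      have hkey : (algebraMap K L c - algebraMap K L c') * ((m0 - τ m0) * (τ x₀ * x₀)) = 0 := by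
        linear_combination hcc
      rcases mul_eq_zero.mp hkey with h | h
      · exact hinj (sub_eq_zero.mp h)
      · exfalso
        rcases mul_eq_zero.mp h with h' | h'
        · exact hm0τ (sub_eq_zero.mp h').symm
        · exact (mul_ne_zero hτx₀ hx₀0) h'
    exact (Set.infinite_range_of_injective hfinj)
      (hTfin.subset (Set.range_subset_iff.mpr hrange))
  -- basic consequences
  have hσinvx : σ⁻¹ x = z⁻¹ * x := by
    have h := congrArg (⇑σ⁻¹) hxσ
    rw [← AlgEquiv.mul_apply, inv_mul_cancel, AlgEquiv.one_apply, map_mul, hσz σ⁻¹] at h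
    apply mul_left_cancel₀ hz0
    rw [← h, ← mul_assoc, mul_inv_cancel₀ hz0, one_mul]
  have hστx : σ (τ x) = z⁻¹ * τ x := by
    have hστ : σ * τ = τ * σ⁻¹ := by
      have h := congrArg (fun g => τ * g) hrel
      rw [← mul_assoc, ← mul_assoc, hτ2, one_mul] at h
      rw [h]
    calc σ (τ x) = (σ * τ) x := rfl
    _ = (τ * σ⁻¹) x := by rw [hστ]
    _ = τ (σ⁻¹ x) := rfl
    _ = z⁻¹ * τ x := by rw [hσinvx, map_mul, map_inv₀, hσz τ]
  -- F
  obtain ⟨F, hF⟩ : ∃ k : K, algebraMap K L k = x * τ x := by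
    apply hfix
    · rw [map_mul, hxσ, hστx, mul_mul_mul_comm, mul_inv_cancel₀ hz0, one_mul]
    · rw [map_mul, hττ]
      ring
  -- A
  obtain ⟨A, hA⟩ : ∃ k : K, algebraMap K L k = x ^ n + (τ x) ^ n := by
    apply hfix
    · rw [map_add, map_pow, map_pow, hxσ, hστx, mul_pow, mul_pow, inv_pow, hzn,
        inv_one, one_mul, one_mul]
    · rw [map_add, map_pow, map_pow, hττ]
      ring
  -- group elements have the form σ^k or σ^k * τ
  have hswap : ∀ k : ℤ, τ * σ ^ k = σ ^ (-k) * τ := by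
    intro k
    have h1 : τ * σ * τ⁻¹ = σ⁻¹ := by rw [hτinv]; exact hrel
    have h2 : (MulAut.conj τ) (σ ^ k) = ((MulAut.conj τ) σ) ^ k := map_zpow _ _ _
    rw [MulAut.conj_apply, MulAut.conj_apply, h1, inv_zpow', hτinv] at h2
    calc τ * σ ^ k = τ * σ ^ k * τ * τ := by rw [mul_assoc, hτ2, mul_one]
    _ = σ ^ (-k) * τ := by rw [h2]
  have hform : ∀ g : L ≃ₐ[K] L, ∃ k : ℤ, g = σ ^ k ∨ g = σ ^ k * τ := by
    intro g
    have hg : g ∈ Subgroup.closure ({σ, τ} : Set (L ≃ₐ[K] L)) := by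
      rw [hgen]; trivial
    induction hg using Subgroup.closure_induction with
    | mem a ha =>
        rcases ha with h | h
        · exact ⟨1, Or.inl (by rw [h, zpow_one])⟩
        · rw [Set.mem_singleton_iff] at h
          exact ⟨0, Or.inr (by rw [h, zpow_zero, one_mul])⟩
    | one => exact ⟨0, Or.inl (zpow_zero σ).symm⟩
    | mul a b _ _ ha hb =>
        obtain ⟨k, hk⟩ := ha
        obtain ⟨l, hl⟩ := hb
        rcases hk with rfl | rfl <;> rcases hl with rfl | rfl
        · exact ⟨k + l, Or.inl (zpow_add σ k l).symm⟩
        · exact ⟨k + l, Or.inr (by rw [← mul_assoc, ← zpow_add])⟩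
        · refine ⟨k - l, Or.inr ?_⟩
          rw [mul_assoc, hswap l, ← mul_assoc, ← zpow_add, ← sub_eq_add_neg]
        · refine ⟨k - l, Or.inl ?_⟩
          rw [mul_assoc, ← mul_assoc τ, hswap l, mul_assoc, hτ2, mul_one,
            ← zpow_add, ← sub_eq_add_neg]
    | inv a _ ha =>
        obtain ⟨k, hk⟩ := ha
        rcases hk with rfl | rfl
        · exact ⟨-k, Or.inl (by rw [← zpow_neg])⟩
        · refine ⟨k, Or.inr ?_⟩
          rw [mul_inv_rev, hτinv, ← zpow_neg, hswap, neg_neg]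
  -- powers of σ acting on x
  have hxnat : ∀ j : ℕ, (σ ^ j) x = z ^ j * x := by
    intro j
    induction j with
    | zero => simp
    | succ j ih =>
        rw [pow_succ', AlgEquiv.mul_apply, ih, map_mul, map_pow, hσz, hxσ, pow_succ]
        ring
  have hzpow_eq : ∀ k : ℤ, σ ^ k = σ ^ ((k % (n : ℤ)).toNat) := by
    intro k
    have hnn : (0 : ℤ) ≤ k % (n : ℤ) := Int.emod_nonneg k (by exact_mod_cast hn.ne')
    conv_lhs => rw [← zpow_mod_orderOf σ k]
    rw [hσ, ← zpow_natCast, Int.toNat_of_nonneg hnn]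
  -- any automorphism fixing x is the identity
  have hfixg : ∀ g : L ≃ₐ[K] L, g x = x → g = 1 := by
    intro g hgx
    obtain ⟨k, hk | hk⟩ := hform g
    · subst hk
      rw [hzpow_eq k] at hgx ⊢
      rw [hxnat] at hgx
      have hzm : z ^ ((k % (n : ℤ)).toNat) = 1 := by
        have := mul_right_cancel₀ hx0 (hgx.trans (one_mul x).symm)
        exact this
      obtain ⟨t, ht⟩ := (hz.pow_eq_one_iff_dvd _).mp hzm
      rw [ht, pow_mul, hσn, one_pow]
    · exfalso
      subst hk
      have h1 : (σ ^ k) (τ x) = x := by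
        rw [← AlgEquiv.mul_apply]; exact hgx
      have h2 : τ x = (σ ^ (-k)) x := by
        have h := congrArg (⇑(σ ^ (-k))) h1
        rwa [← AlgEquiv.mul_apply, ← zpow_add, neg_add_cancel, zpow_zero,
          AlgEquiv.one_apply] at h
      rw [hzpow_eq (-k), hxnat] at h2
      exact hxgood _ (by rw [← pow_mul, mul_comm, pow_mul, hzn, one_pow]) h2
  -- K(x) = L
  have hadj : IntermediateField.adjoin K {x} = ⊤ := by
    have hsub : IntermediateField.fixingSubgroup (IntermediateField.adjoin K {x}) = ⊥ := by
      rw [eq_bot_iff]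
      intro g hg
      rw [Subgroup.mem_bot]
      apply hfixg
      exact hg ⟨x, IntermediateField.subset_adjoin K {x} rfl⟩
    have hbotfix : IntermediateField.fixedField (⊥ : Subgroup (L ≃ₐ[K] L)) = ⊤ := by
      rw [eq_top_iff]
      intro y _
      rintro ⟨g, hg⟩
      rw [Subgroup.mem_bot] at hg
      subst hg
      rfl
    have h := IsGalois.fixedField_fixingSubgroup (IntermediateField.adjoin K {x})
    rw [hsub, hbotfix] at h
    exact h.symm
  refine ⟨x, A / 2, F, hadj, ?_, hxσ, hF.symm⟩
  have h2a : 2 * algebraMap K L (A / 2) = algebraMap K L A := by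
    rw [map_div₀, map_ofNat]
    field_simp
  rw [h2a, hA, hF]
  rw [two_mul, pow_add, mul_pow]
  ring
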